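/- Let δ > 0, 0 < b ≤ 1, and β < 0. Let B, H be continuous on (-1,-1+δ] with inf_{x ∈ (-1,-1+δ]} (1+x)^{1-b}·H(x) > -∞ and lim_{x→-1⁺} (1+x)·B(x) = -β. Suppose V ∈ C¹((-1,-1+δ]) satisfies the linear equation V'(x) + B(x)·V(x) = H(x) on (-1,-1+δ) together with limsup_{x→-1⁺} V(x)·exp(∫_{-1+δ}^{x} B(s) ds) ≥ 0. Then for every ε > 0 there exists a constant C > 0 such that -V(x) ≤ C·(1+x)^{b-ε} for all x ∈ (-1,-1+δ]. -/

import Mathlib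

open Set Filter Topology

set_option maxHeartbeats 1000000 in
/-- Lower bound -V(x) ≤ C(1+x)^{b-ε} for solutions of V' + BV = H when β < 0,
under the limsup condition. -/
theorem stmt17 (δ b β : ℝ) (hδ : 0 < δ) (hb₀ : 0 < b) (hb₁ : b ≤ 1) (hβ : β < 0)
    (B H V V' : ℝ → ℝ)
    (hB : ContinuousOn B (Ioc (-1 : ℝ) (-1 + δ)))
    (hH : ContinuousOn H (Ioc (-1 : ℝ) (-1 + δ)))
    (hHinf : ∃ m : ℝ, ∀ x ∈ Ioc (-1 : ℝ) (-1 + δ), m ≤ (1 + x) ^ (1 - b) * H x)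
    (hBlim : Tendsto (fun x => (1 + x) * B x) (𝓝[>] (-1)) (𝓝 (-β)))
    (hV : ∀ x ∈ Ioc (-1 : ℝ) (-1 + δ),
      HasDerivWithinAt V (V' x) (Ioc (-1 : ℝ) (-1 + δ)) x)
    (hV' : ContinuousOn V' (Ioc (-1 : ℝ) (-1 + δ)))
    (heq : ∀ x ∈ Ioo (-1 : ℝ) (-1 + δ), V' x + B x * V x = H x)
    (hlimsup : (0 : EReal) ≤
      Filter.limsup (fun x => ((V x * Real.exp (∫ s in (-1 + δ)..x, B s) : ℝ) : EReal))
        (𝓝[>] (-1))) :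
    ∀ ε > (0 : ℝ), ∃ C > (0 : ℝ), ∀ x ∈ Ioc (-1 : ℝ) (-1 + δ),
      -V x ≤ C * (1 + x) ^ (b - ε) := by
  obtain ⟨m, hm⟩ := hHinf
  set E : ℝ → ℝ := fun y => Real.exp (∫ s in (-1 + δ)..y, B s) with hEdef
  have hEx : ∀ x, Real.exp (∫ s in (-1 + δ)..x, B s) = E x := fun _ => rfl
  -- the key result for small ε
  have key : ∀ ε : ℝ, 0 < ε → ε < b →
      ∃ C > (0:ℝ), ∀ x ∈ Ioc (-1:ℝ) (-1+δ), -V x ≤ C * (1+x) ^ (b-ε) := by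
    intro ε hε hεb
    -- choose x₁ close to -1 where (1+x)B(x) > 0
    have hev : ∀ᶠ x in 𝓝[>] (-1:ℝ), 0 < (1+x) * B x :=
      hBlim.eventually (eventually_gt_nhds (by linarith : (0:ℝ) < -β))
    obtain ⟨u, hu, huB⟩ := (nhdsGT_basis (-1:ℝ)).eventually_iff.mp hev
    set x₁ : ℝ := -1 + min (u + 1) δ / 2 with hx₁def
    have hmin : 0 < min (u + 1) δ := lt_min (by linarith) hδ
    have hx₁₁ : (-1:ℝ) < x₁ := by simp only [hx₁def]; linarith
    have hx₁u : x₁ < u := by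
      have : min (u+1) δ ≤ u + 1 := min_le_left _ _
      simp only [hx₁def]; linarith
    have hx₁δ : x₁ < -1 + δ := by
      have : min (u+1) δ ≤ δ := min_le_right _ _
      simp only [hx₁def]; linarith
    have h1x₁ : 0 < 1 + x₁ := by linarith
    have hx₁B : ∀ x ∈ Ioc (-1:ℝ) x₁, 0 < (1+x) * B x := fun x hx =>
      huB ⟨hx.1, lt_of_le_of_lt hx.2 hx₁u⟩
    -- derivative facts
    have hIoc_nhds : ∀ x ∈ Ioo (-1:ℝ) (-1+δ), Ioc (-1:ℝ) (-1+δ) ∈ 𝓝 x := fun x hx =>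
      mem_nhds_iff.mpr ⟨Ioo (-1) (-1+δ), Ioo_subset_Ioc_self, isOpen_Ioo, hx⟩
    have hVd : ∀ x ∈ Ioo (-1:ℝ) (-1+δ), HasDerivAt V (V' x) x := fun x hx =>
      (hV x (Ioo_subset_Ioc_self hx)).hasDerivAt (hIoc_nhds x hx)
    have hEd : ∀ x ∈ Ioo (-1:ℝ) (-1+δ), HasDerivAt E (E x * B x) x := by
      intro x hx
      have hsub : Icc x (-1+δ) ⊆ Ioc (-1) (-1+δ) := fun y hy => ⟨lt_of_lt_of_le hx.1 hy.1, hy.2⟩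
      have hint : IntervalIntegrable B MeasureTheory.volume (-1+δ) x := by
        apply ContinuousOn.intervalIntegrable
        apply hB.mono
        rw [uIcc_of_ge hx.2.le]
        exact hsub
      have hmeas : StronglyMeasurableAtFilter B (𝓝 x) MeasureTheory.volume :=
        ContinuousOn.stronglyMeasurableAtFilter isOpen_Ioo (hB.mono Ioo_subset_Ioc_self) x hx
      have hcont : ContinuousAt B x :=
        (hB.mono Ioo_subset_Ioc_self).continuousAt (isOpen_Ioo.mem_nhds hx)
      exact (intervalIntegral.integral_hasDerivAt_right hint hmeas hcont).exp
    have hφd : ∀ x : ℝ, -1 < x →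
        HasDerivAt (fun y => (1+y) ^ (b-ε)) ((b-ε) * (1+x) ^ (b-ε-1)) x := by
      intro x hx
      have h1 : HasDerivAt (fun y : ℝ => 1 + y) 1 x := (hasDerivAt_id x).const_add 1
      have h2 := Real.hasDerivAt_rpow_const (x := 1+x) (p := b-ε)
        (Or.inl (by linarith : (1:ℝ)+x ≠ 0))
      have h3 := h2.comp x h1
      rw [mul_one] at h3; exact h3
    -- compact part bound
    have hVc : ContinuousOn V (Ioc (-1:ℝ) (-1+δ)) := fun x hx => (hV x hx).continuousWithinAt
    have hIccsub : Icc x₁ (-1+δ) ⊆ Ioc (-1:ℝ) (-1+δ) := fun y hy =>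
      ⟨lt_of_lt_of_le hx₁₁ hy.1, hy.2⟩
    obtain ⟨x₀, hx₀mem, hx₀max⟩ := isCompact_Icc.exists_isMaxOn
      (⟨x₁, le_refl _, hx₁δ.le⟩ : (Icc x₁ (-1+δ)).Nonempty)
      ((hVc.mono hIccsub).neg)
    set M : ℝ := -V x₀ with hMdef
    have hM : ∀ x ∈ Icc x₁ (-1+δ), -V x ≤ M := fun x hx => hx₀max hx
    -- the constant
    set K : ℝ := (|m|+1) * (1+x₁) ^ ε / (b-ε) + (|M|+1) * (1+x₁) ^ (-(b-ε)) + 1 with hKdef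
    have ht1 : 0 ≤ (|m|+1) * (1+x₁) ^ ε / (b-ε) := by
      apply div_nonneg _ (by linarith)
      have := abs_nonneg m
      positivity
    have ht2 : 0 ≤ (|M|+1) * (1+x₁) ^ (-(b-ε)) := by
      have := abs_nonneg M
      positivity
    have hK0 : 0 < K := by simp only [hKdef]; linarith
    refine ⟨K, hK0, ?_⟩
    -- Claim 1: compact part
    have claim1 : ∀ x ∈ Icc x₁ (-1+δ), -V x ≤ K * (1+x) ^ (b-ε) := by
      intro x hx
      have h1x : 0 < 1 + x := by have := hx.1; linarith
      have e0 : (1+x₁) ^ (-(b-ε)) * (1+x₁) ^ (b-ε) = 1 := by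
        rw [← Real.rpow_add h1x₁]; norm_num
      have h2 : |M| + 1 ≤ K * (1+x₁) ^ (b-ε) := by
        have hpos : 0 < (1+x₁) ^ (b-ε) := Real.rpow_pos_of_pos h1x₁ _
        calc |M| + 1 = ((|M|+1) * (1+x₁) ^ (-(b-ε))) * (1+x₁) ^ (b-ε) := by
              rw [mul_assoc, e0, mul_one]
          _ ≤ K * (1+x₁) ^ (b-ε) := mul_le_mul_of_nonneg_right
              (show (|M|+1) * (1+x₁) ^ (-(b-ε)) ≤ K by simp only [hKdef]; linarith) hpos.le
      have h3 : K * (1+x₁) ^ (b-ε) ≤ K * (1+x) ^ (b-ε) := by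
        apply mul_le_mul_of_nonneg_left _ hK0.le
        exact Real.rpow_le_rpow h1x₁.le (by linarith [hx.1]) (by linarith)
      have h4 : -V x ≤ M := hM x hx
      have h5 : M ≤ |M| + 1 := by have := le_abs_self M; linarith
      linarith
    -- the auxiliary function g
    set g : ℝ → ℝ := fun y => (-V y - K * (1+y) ^ (b-ε)) * E y with hgdef
    have hgd : ∀ z ∈ Ioc (-1:ℝ) x₁, HasDerivAt g
        ((-V' z - K * ((b-ε) * (1+z) ^ (b-ε-1))) * E z
          + (-V z - K * (1+z) ^ (b-ε)) * (E z * B z)) z := by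
      intro z hz
      have hz' : z ∈ Ioo (-1:ℝ) (-1+δ) := ⟨hz.1, lt_of_le_of_lt hz.2 hx₁δ⟩
      exact ((hVd z hz').neg.sub ((hφd z hz.1).const_mul K)).mul (hEd z hz')
    have hgd_le : ∀ z ∈ Ioo (-1:ℝ) x₁,
        (-V' z - K * ((b-ε) * (1+z) ^ (b-ε-1))) * E z
          + (-V z - K * (1+z) ^ (b-ε)) * (E z * B z) ≤ 0 := by
      intro z hz
      have hz1 : 0 < 1 + z := by have := hz.1; linarith
      have hz' : z ∈ Ioo (-1:ℝ) (-1+δ) := ⟨hz.1, lt_trans hz.2 hx₁δ⟩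
      have hBz : 0 < (1+z) * B z := hx₁B z ⟨hz.1, hz.2.le⟩
      have hb1 : (0:ℝ) < (1+z) ^ (b-1) := Real.rpow_pos_of_pos hz1 _
      have hbε1 : (0:ℝ) < (1+z) ^ (b-ε-1) := Real.rpow_pos_of_pos hz1 _
      have hHz : m * (1+z) ^ (b-1) ≤ H z := by
        have h := hm z (Ioo_subset_Ioc_self hz')
        have hp : (1+z) ^ (b-1) * (1+z) ^ (1-b) = 1 := by
          rw [← Real.rpow_add hz1]; norm_num
        have h2 := mul_le_mul_of_nonneg_right h hb1.le
        calc m * (1+z) ^ (b-1) ≤ ((1+z) ^ (1-b) * H z) * (1+z) ^ (b-1) := by linarith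
          _ = ((1+z) ^ (b-1) * (1+z) ^ (1-b)) * H z := by ring
          _ = H z := by rw [hp, one_mul]
      have heqz := heq z hz'
      have e1 : (1+z) ^ (b-ε) = (1+z) ^ (b-ε-1) * (1+z) := by
        rw [← Real.rpow_add_one (ne_of_gt hz1)]; ring_nf
      have e2 : (1+z) ^ (b-ε-1) = (1+z) ^ (b-1) * (1+z) ^ (-ε) := by
        rw [← Real.rpow_add hz1]; ring_nf
      have e3 : (1+x₁) ^ (-ε) ≤ (1+z) ^ (-ε) :=
        Real.rpow_le_rpow_of_nonpos hz1 (by linarith [hz.2] : 1+z ≤ 1+x₁) (by linarith)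
      have hKK : |m| + 1 ≤ K * (b-ε) * (1+x₁) ^ (-ε) := by
        have e4 : (1+x₁) ^ ε * (1+x₁) ^ (-ε) = 1 := by
          rw [← Real.rpow_add h1x₁]; norm_num
        have h1 : (|m|+1) * (1+x₁) ^ ε / (b-ε) ≤ K := by simp only [hKdef]; linarith
        have hεpos : (0:ℝ) < (1+x₁) ^ (-ε) := Real.rpow_pos_of_pos h1x₁ _
        have h2 := mul_le_mul_of_nonneg_right h1
          (mul_nonneg (by linarith : (0:ℝ) ≤ b-ε) hεpos.le)
        have hne : b - ε ≠ 0 := ne_of_gt (by linarith)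
        have e5 : (|m|+1) * (1+x₁) ^ ε / (b-ε) * (b-ε) = (|m|+1) * (1+x₁) ^ ε :=
          div_mul_cancel₀ _ hne
        calc |m| + 1 = ((|m|+1) * (1+x₁) ^ ε) * (1+x₁) ^ (-ε) := by
              rw [mul_assoc, e4, mul_one]
          _ = ((|m|+1) * (1+x₁) ^ ε / (b-ε) * (b-ε)) * (1+x₁) ^ (-ε) := by rw [e5]
          _ = ((|m|+1) * (1+x₁) ^ ε / (b-ε)) * ((b-ε) * (1+x₁) ^ (-ε)) := by ring
          _ ≤ K * ((b-ε) * (1+x₁) ^ (-ε)) := h2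
          _ = K * (b-ε) * (1+x₁) ^ (-ε) := by ring
      have h5 : (|m|+1) * (1+z) ^ (b-1) ≤ K * ((1+z) ^ (b-ε-1) * ((b-ε) + (1+z) * B z)) := by
        calc (|m|+1) * (1+z) ^ (b-1)
            ≤ (K * (b-ε) * (1+x₁) ^ (-ε)) * (1+z) ^ (b-1) :=
              mul_le_mul_of_nonneg_right hKK hb1.le
          _ ≤ (K * (b-ε) * (1+z) ^ (-ε)) * (1+z) ^ (b-1) := by
              apply mul_le_mul_of_nonneg_right _ hb1.le
              exact mul_le_mul_of_nonneg_left e3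
                (mul_nonneg hK0.le (by linarith))
          _ = K * ((1+z) ^ (b-ε-1) * (b-ε)) := by rw [e2]; ring
          _ ≤ K * ((1+z) ^ (b-ε-1) * ((b-ε) + (1+z) * B z)) := by
              apply mul_le_mul_of_nonneg_left _ hK0.le
              apply mul_le_mul_of_nonneg_left (by linarith) hbε1.le
      have hH2 : -H z ≤ (|m|+1) * (1+z) ^ (b-1) := by
        have hmm : -m ≤ |m| + 1 := by have := neg_abs_le m; linarith
        have h6 := mul_le_mul_of_nonneg_right hmm hb1.le
        have h7 : -m * (1+z) ^ (b-1) = -(m * (1+z) ^ (b-1)) := by ring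
        linarith
      have expand : (-V' z - K * ((b-ε) * (1+z) ^ (b-ε-1)))
          + (-V z - K * (1+z) ^ (b-ε)) * B z
          = -H z - K * ((1+z) ^ (b-ε-1) * ((b-ε) + (1+z) * B z)) := by
        rw [e1]; linear_combination -heqz
      have hS : (-V' z - K * ((b-ε) * (1+z) ^ (b-ε-1)))
          + (-V z - K * (1+z) ^ (b-ε)) * B z ≤ 0 := by
        rw [expand]; linarith
      have hEpos : 0 < E z := Real.exp_pos _
      calc (-V' z - K * ((b-ε) * (1+z) ^ (b-ε-1))) * E z
          + (-V z - K * (1+z) ^ (b-ε)) * (E z * B z)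
          = ((-V' z - K * ((b-ε) * (1+z) ^ (b-ε-1)))
              + (-V z - K * (1+z) ^ (b-ε)) * B z) * E z := by ring
        _ ≤ 0 * E z := mul_le_mul_of_nonneg_right hS hEpos.le
        _ = 0 := zero_mul _
    -- g is antitone on (-1, x₁]
    have hg_anti : ∀ y x : ℝ, y ∈ Ioc (-1:ℝ) x₁ → x ∈ Ioc (-1:ℝ) x₁ → y ≤ x → g x ≤ g y := by
      intro y x hy hx hyx
      have hIcc : Icc y x ⊆ Ioc (-1:ℝ) x₁ := fun t ht =>
        ⟨lt_of_lt_of_le hy.1 ht.1, le_trans ht.2 hx.2⟩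
      have hcont : ContinuousOn g (Icc y x) := fun t ht =>
        ((hgd t (hIcc ht)).continuousAt).continuousWithinAt
      have hdiff : DifferentiableOn ℝ g (interior (Icc y x)) := by
        rw [interior_Icc]
        intro t ht
        exact ((hgd t (hIcc (Ioo_subset_Icc_self ht))).differentiableAt).differentiableWithinAt
      have hderiv : ∀ t ∈ interior (Icc y x), deriv g t ≤ 0 := by
        rw [interior_Icc]
        intro t ht
        rw [(hgd t (hIcc (Ioo_subset_Icc_self ht))).deriv]
        exact hgd_le t ⟨(hIcc (Ioo_subset_Icc_self ht)).1, lt_of_lt_of_le ht.2 hx.2⟩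
      exact antitoneOn_of_deriv_nonpos (convex_Icc y x) hcont hdiff hderiv
        (left_mem_Icc.mpr hyx) (right_mem_Icc.mpr hyx) hyx
    -- Claim 2: near -1
    have claim2 : ∀ x ∈ Ioc (-1:ℝ) x₁, -V x ≤ K * (1+x) ^ (b-ε) := by
      intro x hx
      have hgx : ∀ c : ℝ, 0 < c → g x ≤ 0 + c := by
        intro c hc
        have hfreq : ∃ᶠ y in 𝓝[>] (-1:ℝ), -c < V y * E y := by
          by_contra hcon
          rw [not_frequently] at hcon
          have hev2 : ∀ᶠ y in 𝓝[>] (-1:ℝ),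
              ((V y * Real.exp (∫ s in (-1 + δ)..y, B s) : ℝ) : EReal) ≤ ((-c : ℝ) : EReal) :=
            hcon.mono (fun y hy => by
              rw [EReal.coe_le_coe_iff, hEx y]
              exact not_lt.mp hy)
          have hls := Filter.limsup_le_of_le (u := fun y =>
            ((V y * Real.exp (∫ s in (-1 + δ)..y, B s) : ℝ) : EReal))
            (by isBoundedDefault) hev2
          have h0 : (0 : EReal) ≤ ((-c : ℝ) : EReal) := le_trans hlimsup hls
          have : (0:ℝ) ≤ -c := by
            rw [show (0 : EReal) = ((0:ℝ) : EReal) from rfl] at h0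
            exact EReal.coe_le_coe_iff.mp h0
          linarith
        obtain ⟨y, hyVE, hymem⟩ := (hfreq.and_eventually
          (Ioo_mem_nhdsGT_of_mem (⟨le_refl _, hx.1⟩ : (-1:ℝ) ∈ Ico (-1) x))).exists
        have hy1 : 0 < 1 + y := by have := hymem.1; linarith
        have hgyx : g x ≤ g y :=
          hg_anti y x ⟨hymem.1, le_trans hymem.2.le hx.2⟩ hx hymem.2.le
        have hEy : 0 < E y := Real.exp_pos _
        have hφy : 0 < (1+y) ^ (b-ε) := Real.rpow_pos_of_pos hy1 _
        have hgy : g y ≤ c := by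
          simp only [hgdef]
          have expand2 : (-V y - K * (1+y) ^ (b-ε)) * E y
              = -(V y * E y) - (K * (1+y) ^ (b-ε)) * E y := by ring
          rw [expand2]
          have := mul_pos (mul_pos hK0 hφy) hEy
          linarith
        linarith
      have hgx0 : g x ≤ 0 := le_of_forall_pos_le_add hgx
      have hEpos : 0 < E x := Real.exp_pos _
      have hgx0' : (-V x - K * (1+x) ^ (b-ε)) * E x ≤ 0 := by
        have := hgx0; simp only [hgdef] at this; exact this
      have h2 : -V x - K * (1+x) ^ (b-ε) ≤ 0 := by
        have h3 : (-V x - K * (1+x) ^ (b-ε)) * E x ≤ 0 * E x := by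
          rw [zero_mul]; exact hgx0'
        exact le_of_mul_le_mul_right h3 hEpos
      linarith
    -- combine
    intro x hx
    rcases le_or_gt x x₁ with h | h
    · exact claim2 x ⟨hx.1, h⟩
    · exact claim1 x ⟨h.le, hx.2⟩
  -- reduce general ε to ε' = min ε (b/2)
  intro ε hε
  set ε' : ℝ := min ε (b/2) with hε'def
  have hε'0 : 0 < ε' := lt_min hε (by linarith)
  have hε'b : ε' < b := lt_of_le_of_lt (min_le_right _ _) (by linarith)
  have hε'ε : ε' ≤ ε := min_le_left _ _
  obtain ⟨C, hC, hCb⟩ := key ε' hε'0 hε'b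
  refine ⟨C * δ ^ (ε - ε'), mul_pos hC (Real.rpow_pos_of_pos hδ _), ?_⟩
  intro x hx
  have h1x : 0 < 1 + x := by have := hx.1; linarith
  have hxd : 1 + x ≤ δ := by have := hx.2; linarith
  have e : (1+x) ^ (b - ε') = (1+x) ^ (b-ε) * (1+x) ^ (ε - ε') := by
    rw [← Real.rpow_add h1x]; ring_nf
  have h2 : (1+x) ^ (ε - ε') ≤ δ ^ (ε - ε') :=
    Real.rpow_le_rpow h1x.le hxd (by linarith)
  have h3 : 0 < (1+x) ^ (b-ε) := Real.rpow_pos_of_pos h1x _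
  calc -V x ≤ C * (1+x) ^ (b - ε') := hCb x hx
    _ = C * (1+x) ^ (b-ε) * (1+x) ^ (ε - ε') := by rw [e]; ring
    _ ≤ C * (1+x) ^ (b-ε) * δ ^ (ε - ε') := by
        apply mul_le_mul_of_nonneg_left h2 (by positivity)
    _ = C * δ ^ (ε - ε') * (1+x) ^ (b-ε) := by ring
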